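/- Let G be a finite simple graph with m ≥ 2 edges and minimum degree at least 1, let A and B be disjoint sets of vertices of G with |A| ≤ |B|, and let ℓ ≥ 32·log₂ m be an integer. Then at least one of the following holds: (i) there exist a matching M between A and B with |M| = |A| (so every vertex of A is matched to a distinct vertex of B), together with a family (P_{ab})_{(a,b)∈M} of paths in G, where each P_{ab} joins a to b and has length at most ℓ, and every edge of G lies on at most ℓ² of these paths; or (ii) there is a partition of V(G) into nonempty sets X and Y with δ_G(X) ≤ (24·log₂ m/ℓ)·min(vol_G(X), vol_G(Y)). -/

import Mathlib

open Finset
open scoped Classical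

noncomputable section

variable {V : Type*} [Fintype V]

/-- The degree of the vertex `v` in the graph `G`. -/
def gdeg (G : SimpleGraph V) (v : V) : ℕ :=
  (Finset.univ.filter fun u => G.Adj v u).card

/-- The volume of a vertex set `S` in `G`: the sum of degrees of its vertices. -/
def gvol (G : SimpleGraph V) (S : Finset V) : ℕ := ∑ v ∈ S, gdeg G v

/-- The number of edges of `G` with exactly one endpoint in `S`. -/
def gcut (G : SimpleGraph V) (S : Finset V) : ℕ :=
  (Finset.univ.filter fun p : V × V => p.1 ∈ S ∧ p.2 ∉ S ∧ G.Adj p.1 p.2).card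

/-- The number of edges of `G`. -/
def edgeCount (G : SimpleGraph V) : ℕ :=
  (Finset.univ.filter fun p : V × V => G.Adj p.1 p.2).card / 2

set_option linter.unusedSectionVars false
set_option maxHeartbeats 1000000

variable (G : SimpleGraph V)

lemma gdeg_eq_degree (v : V) : gdeg G v = G.degree v := by
  classical
  rw [gdeg, SimpleGraph.degree]
  congr 1
  ext u
  simp [SimpleGraph.mem_neighborFinset]

lemma gvol_univ : gvol G Finset.univ = 2 * edgeCount G := by
  classical
  have h1 : ∑ v, G.degree v = 2 * G.edgeFinset.card :=
    SimpleGraph.sum_degrees_eq_twice_card_edges G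
  have h2 : 2 * G.edgeFinset.card = (univ.filter fun p : V × V => G.Adj p.1 p.2).card := by
    have := SimpleGraph.two_mul_card_edgeFinset G
    convert this using 2
  have : gvol G Finset.univ = ∑ v, G.degree v := by
    unfold gvol; simp [gdeg_eq_degree]
  rw [this, h1, edgeCount, ← h2]
  omega

lemma gvol_split (S : Finset V) :
    gvol G Finset.univ = gvol G S + gvol G (Finset.univ \ S) := by
  rw [gvol, gvol, gvol, ← Finset.sum_union (Finset.disjoint_sdiff)]
  congr 1
  simp [Finset.union_sdiff_of_subset (Finset.subset_univ S)]

lemma card_le_gvol (hmin : ∀ v : V, 1 ≤ gdeg G v) (S : Finset V) :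
    S.card ≤ gvol G S := by
  calc S.card = ∑ _v ∈ S, 1 := (Finset.card_eq_sum_ones S)
  _ ≤ _ := Finset.sum_le_sum fun v _ => hmin v

lemma gvol_mono {S T : Finset V} (h : S ⊆ T) : gvol G S ≤ gvol G T :=
  Finset.sum_le_sum_of_subset h

variable (D : Finset (Sym2 V))


def stepD (S : Finset V) : Finset V :=
  S ∪ Finset.univ.filter (fun v => v ∉ S ∧ ∃ u ∈ S, G.Adj u v ∧ s(u, v) ∉ D)

def ballD (S : Finset V) : ℕ → Finset V
  | 0 => S
  | (n+1) => stepD G D (ballD S n)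

lemma subset_stepD (S : Finset V) : S ⊆ stepD G D S := Finset.subset_union_left

lemma subset_ballD (S : Finset V) (n : ℕ) : S ⊆ ballD G D S n := by
  induction n with
  | zero => exact Finset.Subset.refl S
  | succ n ih => exact ih.trans (subset_stepD G D _)

lemma ballD_mono (S : Finset V) {a b : ℕ} (h : a ≤ b) :
    ballD G D S a ⊆ ballD G D S b := by
  induction b with
  | zero => simp_all [Nat.le_zero.mp h]
  | succ b ih =>
    rcases Nat.lt_or_ge a (b+1) with h'|h'
    · exact (ih (Nat.lt_succ_iff.mp h')).trans (subset_stepD G D _)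
    · have : a = b + 1 := le_antisymm h h'
      subst this; exact Finset.Subset.refl _

lemma reach_of_mem_ballD (S : Finset V) (n : ℕ) (v : V) (hv : v ∈ ballD G D S n) :
    ∃ u ∈ S, ∃ w : G.Walk u v, w.length ≤ n ∧ ∀ e ∈ w.edges, e ∉ D := by
  induction n generalizing v with
  | zero => exact ⟨v, hv, SimpleGraph.Walk.nil, by simp⟩
  | succ n ih =>
    rw [ballD, stepD, Finset.mem_union] at hv
    rcases hv with hv | hv
    · obtain ⟨u, hu, w, hw1, hw2⟩ := ih v hv
      exact ⟨u, hu, w, hw1.trans (Nat.le_succ n), hw2⟩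
    · rw [Finset.mem_filter] at hv
      obtain ⟨-, -, x, hx, hadj, hD⟩ := hv
      obtain ⟨u, hu, w, hw1, hw2⟩ := ih x hx
      refine ⟨u, hu, w.concat hadj, ?_, ?_⟩
      · rw [SimpleGraph.Walk.length_concat]; omega
      · intro e he
        rw [SimpleGraph.Walk.edges_concat] at he
        rcases (by simpa using he : e ∈ w.edges ∨ e = s(x, v)) with he' | he'
        · exact hw2 e he'
        · subst he'; exact hD

lemma growth_lemma (S : Finset V) :
    gvol G S + gcut G S ≤ gvol G (stepD G D S) + D.card := by
  classical
  set F1 := Finset.univ.filter (fun p : V × V => p.1 ∈ S ∧ p.2 ∉ S ∧ G.Adj p.1 p.2) with hF1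
  set F2 := Finset.univ.filter
    (fun p : V × V => p.1 ∈ S ∧ p.2 ∉ S ∧ G.Adj p.1 p.2 ∧ s(p.1, p.2) ∉ D) with hF2
  have hsub : F2 ⊆ F1 := by
    intro p hp
    simp only [hF1, hF2, Finset.mem_filter] at *
    tauto
  -- (a) gcut ≤ F2.card + D.card
  have ha : gcut G S ≤ F2.card + D.card := by
    have h1 : F1.card ≤ F2.card + (F1 \ F2).card := by
      rw [← Finset.card_union_of_disjoint (Finset.disjoint_sdiff)]
      apply Finset.card_le_card
      intro p hp
      by_cases h : p ∈ F2
      · exact Finset.mem_union.mpr (Or.inl h)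
      · exact Finset.mem_union.mpr (Or.inr (Finset.mem_sdiff.mpr ⟨hp, h⟩))
    have h2 : (F1 \ F2).card ≤ D.card := by
      apply Finset.card_le_card_of_injOn (fun p => s(p.1, p.2))
      · intro p hp
        rw [Finset.mem_coe, Finset.mem_sdiff] at hp
        obtain ⟨hp1, hp2⟩ := hp
        simp only [hF1, hF2, Finset.mem_filter, Finset.mem_univ, true_and] at hp1 hp2
        by_contra hD
        exact hp2 ⟨hp1.1, hp1.2.1, hp1.2.2, hD⟩
      · intro p hp q hq hpq
        rw [Finset.mem_coe, Finset.mem_sdiff] at hp hq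
        have hp1 := (Finset.mem_filter.mp hp.1).2
        have hq1 := (Finset.mem_filter.mp hq.1).2
        rw [Sym2.eq_iff] at hpq
        rcases hpq with ⟨h1, h2⟩ | ⟨h1, h2⟩
        · exact Prod.ext h1 h2
        · exact absurd (h1 ▸ hp1.1) hq1.2.1
    exact (h1.trans (by omega))
  -- (b) gvol S + F2.card ≤ gvol (stepD S)
  have hb : gvol G S + F2.card ≤ gvol G (stepD G D S) := by
    set Fr := Finset.univ.filter
      (fun v => v ∉ S ∧ ∃ u ∈ S, G.Adj u v ∧ s(u, v) ∉ D) with hFr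
    have hdisj : Disjoint S Fr := by
      rw [Finset.disjoint_left]
      intro v hv hv'
      rw [hFr, Finset.mem_filter] at hv'
      exact hv'.2.1 hv
    have hvol : gvol G (stepD G D S) = gvol G S + gvol G Fr := by
      rw [stepD, gvol, Finset.sum_union hdisj]; rfl
    have hcount : F2.card ≤ gvol G Fr := by
      have hfib : ∀ p ∈ F2, p.2 ∈ Fr := by
        intro p hp
        simp only [hF2, Finset.mem_filter, Finset.mem_univ, true_and] at hp
        rw [hFr, Finset.mem_filter]
        exact ⟨Finset.mem_univ _, hp.2.1, p.1, hp.1, hp.2.2.1, hp.2.2.2⟩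
      rw [Finset.card_eq_sum_card_fiberwise hfib, gvol]
      apply Finset.sum_le_sum
      intro v hv
      apply Finset.card_le_card_of_injOn (fun p => p.1)
      · intro p hp
        rw [Finset.mem_coe, Finset.mem_filter] at hp
        obtain ⟨hp1, hp2⟩ := hp
        simp only [hF2, Finset.mem_filter, Finset.mem_univ, true_and] at hp1
        rw [Finset.mem_coe, Finset.mem_filter]
        subst hp2
        exact ⟨Finset.mem_univ _, hp1.2.2.1.symm⟩
      · intro p hp q hq hpq
        rw [Finset.mem_coe, Finset.mem_filter] at hp hq
        exact Prod.ext hpq (hp.2.trans hq.2.symm)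
    omega
  omega

lemma certificate (φ : ℝ) (hφ0 : 0 < φ) (m : ℕ) (hm : 1 ≤ m)
    (hmin : ∀ v : V, 1 ≤ gdeg G v)
    (huniv : gvol G Finset.univ = 2 * m)
    (hexp : ∀ S : Finset V, S.Nonempty → gvol G S ≤ m →
      (Finset.univ \ S).Nonempty → φ * (gvol G S : ℝ) ≤ (gcut G S : ℝ))
    (T : Finset V) (hT : T.Nonempty) (r : ℕ)
    (hball : gvol G (ballD G D T r) ≤ m)
    (hpow : 2 * (m : ℝ) ≤ (1 + φ) ^ r) :
    (T.card : ℝ) ≤ 1 / 2 + (D.card : ℝ) / φ := by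
  have hφ1 : (0:ℝ) < 1 + φ := by linarith
  -- main induction
  have key : ∀ n, n ≤ r → (1 + φ) ^ n * (gvol G T : ℝ) ≤
      (gvol G (ballD G D T n) : ℝ) + (D.card : ℝ) * ∑ i ∈ Finset.range n, (1 + φ) ^ i := by
    intro n
    induction n with
    | zero => intro _; simp [ballD]
    | succ n ih =>
      intro hn
      have hn' : n ≤ r := by omega
      have ihn := ih hn'
      set B := ballD G D T n with hB
      have hBne : B.Nonempty := hT.mono (subset_ballD G D T n)
      have hBvol : gvol G B ≤ m :=
        le_trans (gvol_mono G (ballD_mono G D T hn')) hball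
      have hBcompl : (Finset.univ \ B).Nonempty := by
        rw [Finset.sdiff_nonempty]
        intro hsub
        have : B = Finset.univ := Finset.univ_subset_iff.mp hsub
        rw [this, huniv] at hBvol
        omega
      have hgrow : (gvol G B : ℝ) + (gcut G B : ℝ) ≤
          (gvol G (ballD G D T (n+1)) : ℝ) + (D.card : ℝ) := by
        have := growth_lemma G D B
        have h2 : ballD G D T (n+1) = stepD G D B := rfl
        rw [h2]
        exact_mod_cast this
      have hcut := hexp B hBne hBvol hBcompl
      have hstep : (1 + φ) * (gvol G B : ℝ) ≤
          (gvol G (ballD G D T (n+1)) : ℝ) + (D.card : ℝ) := by nlinarith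
      calc (1 + φ) ^ (n+1) * (gvol G T : ℝ)
          = (1 + φ) * ((1 + φ) ^ n * (gvol G T : ℝ)) := by ring
        _ ≤ (1 + φ) * ((gvol G B : ℝ) + (D.card : ℝ) * ∑ i ∈ Finset.range n, (1 + φ) ^ i) := by
            apply mul_le_mul_of_nonneg_left ihn (le_of_lt hφ1)
        _ = (1 + φ) * (gvol G B : ℝ) +
            (D.card : ℝ) * ((1 + φ) * ∑ i ∈ Finset.range n, (1 + φ) ^ i) := by ring
        _ ≤ ((gvol G (ballD G D T (n+1)) : ℝ) + (D.card : ℝ)) +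
            (D.card : ℝ) * ((1 + φ) * ∑ i ∈ Finset.range n, (1 + φ) ^ i) := by
            have : (0:ℝ) ≤ (D.card : ℝ) * ((1 + φ) * ∑ i ∈ Finset.range n, (1 + φ) ^ i) := by
              positivity
            linarith
        _ = (gvol G (ballD G D T (n+1)) : ℝ) +
            (D.card : ℝ) * ((1 + φ) * ∑ i ∈ Finset.range n, (1 + φ) ^ i + 1) := by ring
        _ = (gvol G (ballD G D T (n+1)) : ℝ) +
            (D.card : ℝ) * ∑ i ∈ Finset.range (n+1), (1 + φ) ^ i := by
            rw [geom_sum_succ]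
  have hfin := key r (le_refl r)
  have hsum : ∑ i ∈ Finset.range r, (1 + φ) ^ i = ((1 + φ) ^ r - 1) / φ := by
    rw [geom_sum_eq (by intro h; linarith : (1:ℝ) + φ ≠ 1)]
    congr 1
    ring
  rw [hsum] at hfin
  have hrpos : (0:ℝ) < (1 + φ) ^ r := pow_pos hφ1 r
  have hTvol : (T.card : ℝ) ≤ (gvol G T : ℝ) := by exact_mod_cast card_le_gvol G hmin T
  have hballvol : (gvol G (ballD G D T r) : ℝ) ≤ (m : ℝ) := by exact_mod_cast hball
  -- (1+φ)^r * volT ≤ m + D * ((1+φ)^r - 1)/φ ≤ m + D*(1+φ)^r/φ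
  have h1 : (1 + φ) ^ r * (gvol G T : ℝ) ≤ (m : ℝ) + (D.card : ℝ) * ((1 + φ) ^ r) / φ := by
    have hD0 : (0:ℝ) ≤ (D.card : ℝ) := Nat.cast_nonneg _
    have : (D.card : ℝ) * (((1 + φ) ^ r - 1) / φ) ≤ (D.card : ℝ) * ((1 + φ) ^ r) / φ := by
      rw [mul_div_assoc]
      apply mul_le_mul_of_nonneg_left _ hD0
      exact (div_le_div_iff_of_pos_right hφ0).mpr (by linarith)
    linarith
  have expand : (1 + φ) ^ r * ((m : ℝ) / (1 + φ) ^ r + (D.card : ℝ) / φ) =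
      (m : ℝ) + (D.card : ℝ) * (1 + φ) ^ r / φ := by
    field_simp
  have h2 : (gvol G T : ℝ) ≤ (m : ℝ) / (1 + φ) ^ r + (D.card : ℝ) / φ := by
    apply le_of_mul_le_mul_left _ hrpos
    rw [expand]
    exact h1
  have hhalf : (m : ℝ) / (1 + φ) ^ r ≤ 1 / 2 := by
    rw [div_le_iff₀ hrpos]
    linarith
  linarith


abbrev PT (G : SimpleGraph V) := Σ (u : V) (v : V), G.Walk u v

def sysEdges : List (PT G) → Finset (Sym2 V)
  | [] => ∅
  | x :: xs => x.2.2.edges.toFinset ∪ sysEdges xs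

lemma mem_sysEdges {PL : List (PT G)} {e : Sym2 V} :
    e ∈ sysEdges G PL ↔ ∃ x ∈ PL, e ∈ x.2.2.edges := by
  induction PL with
  | nil => simp [sysEdges]
  | cons x xs ih => simp [sysEdges, ih]

lemma card_sysEdges {PL : List (PT G)} {ℓ : ℕ} (h : ∀ x ∈ PL, x.2.2.length ≤ ℓ) :
    (sysEdges G PL).card ≤ PL.length * ℓ := by
  induction PL with
  | nil => simp [sysEdges]
  | cons x xs ih =>
    have h1 : (sysEdges G (x :: xs)).card ≤ x.2.2.edges.toFinset.card + (sysEdges G xs).card :=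
      Finset.card_union_le _ _
    have h2 : x.2.2.edges.toFinset.card ≤ ℓ := by
      calc x.2.2.edges.toFinset.card ≤ x.2.2.edges.length := x.2.2.edges.toFinset_card_le
      _ = x.2.2.length := x.2.2.length_edges
      _ ≤ ℓ := h x (by simp)
    have h3 := ih (fun y hy => h y (by simp [hy]))
    simp only [List.length_cons]
    calc (sysEdges G (x :: xs)).card ≤ ℓ + xs.length * ℓ := by omega
    _ = (xs.length + 1) * ℓ := by ring
    _ ≤ _ := le_refl _

def good (A' B' : Finset V) (ℓ c : ℕ) (PL : List (PT G)) : Prop :=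
  (∀ x ∈ PL, x.1 ∈ A' ∧ x.2.1 ∈ B') ∧
  (PL.map fun x => x.1).Nodup ∧
  (PL.map fun x => x.2.1).Nodup ∧
  (∀ x ∈ PL, x.2.2.IsPath ∧ x.2.2.length ≤ ℓ) ∧
  (∀ e : Sym2 V, (PL.countP fun x => decide (e ∈ x.2.2.edges)) ≤ c)

lemma good_nil (A' B' : Finset V) (ℓ c : ℕ) : good G A' B' ℓ c [] := by
  refine ⟨by simp, by simp, by simp, by simp, by simp⟩

lemma good_length_le {A' B' : Finset V} {ℓ c : ℕ} {PL : List (PT G)}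
    (h : good G A' B' ℓ c PL) : PL.length ≤ A'.card := by
  obtain ⟨h1, h2, -, -, -⟩ := h
  calc PL.length = (PL.map fun x => x.1).length := (List.length_map _).symm
  _ = (PL.map fun x => x.1).toFinset.card := (List.toFinset_card_of_nodup h2).symm
  _ ≤ A'.card := by
      apply Finset.card_le_card
      intro a ha
      rw [List.mem_toFinset, List.mem_map] at ha
      obtain ⟨x, hx, rfl⟩ := ha
      exact (h1 x hx).1

lemma good_mono {A' B' A'' B'' : Finset V} {ℓ c c' : ℕ} {PL : List (PT G)}
    (h : good G A' B' ℓ c PL) (hA : A' ⊆ A'') (hB : B' ⊆ B'') (hc : c ≤ c') :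
    good G A'' B'' ℓ c' PL := by
  obtain ⟨h1, h2, h3, h4, h5⟩ := h
  exact ⟨fun x hx => ⟨hA (h1 x hx).1, hB (h1 x hx).2⟩, h2, h3, h4,
    fun e => le_trans (h5 e) hc⟩

lemma good_append {A' B' A'' B'' : Finset V} {ℓ c c' : ℕ} {PL₁ PL₂ : List (PT G)}
    (h1 : good G A' B' ℓ c PL₁) (h2 : good G A'' B'' ℓ c' PL₂)
    (hA : A'' = A' \ (PL₁.map fun x => x.1).toFinset)
    (hB : B'' ⊆ B' \ (PL₁.map fun x => x.2.1).toFinset) :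
    good G A' B' ℓ (c + c') (PL₁ ++ PL₂) := by
  obtain ⟨e1, e2, e3, e4, e5⟩ := h1
  obtain ⟨f1, f2, f3, f4, f5⟩ := h2
  refine ⟨?_, ?_, ?_, ?_, ?_⟩
  · intro x hx
    rcases List.mem_append.mp hx with hx | hx
    · exact e1 x hx
    · refine ⟨?_, ?_⟩
      · have := (f1 x hx).1
        rw [hA, Finset.mem_sdiff] at this
        exact this.1
      · have := hB (f1 x hx).2
        rw [Finset.mem_sdiff] at this
        exact this.1
  · rw [List.map_append]
    apply List.Nodup.append e2 f2
    intro a ha ha'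
    rw [List.mem_map] at ha'
    obtain ⟨x, hx, rfl⟩ := ha'
    have := (f1 x hx).1
    rw [hA, Finset.mem_sdiff, List.mem_toFinset] at this
    exact this.2 ha
  · rw [List.map_append]
    apply List.Nodup.append e3 f3
    intro a ha ha'
    rw [List.mem_map] at ha'
    obtain ⟨x, hx, rfl⟩ := ha'
    have := hB (f1 x hx).2
    rw [Finset.mem_sdiff, List.mem_toFinset] at this
    exact this.2 ha
  · intro x hx
    rcases List.mem_append.mp hx with hx | hx
    · exact e4 x hx
    · exact f4 x hx
  · intro e
    rw [List.countP_append]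
    exact Nat.add_le_add (e5 e) (f5 e)

lemma vol_inter_nonempty {S T : Finset V} (h : gvol G Finset.univ < gvol G S + gvol G T) :
    (S ∩ T).Nonempty := by
  by_contra hne
  rw [Finset.not_nonempty_iff_eq_empty] at hne
  have hdisj : Disjoint S T := Finset.disjoint_iff_inter_eq_empty.mpr hne
  have heq : gvol G S + gvol G T = gvol G (S ∪ T) := by
    rw [gvol, gvol, gvol, Finset.sum_union hdisj]
  rw [heq] at h
  have hle : gvol G (S ∪ T) ≤ gvol G Finset.univ := gvol_mono G (Finset.subset_univ _)
  omega

lemma round_lemma (φ : ℝ) (hφ0 : 0 < φ) (hφ2 : φ ≤ 2) (m : ℕ) (hm : 1 ≤ m)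
    (hmin : ∀ v : V, 1 ≤ gdeg G v)
    (huniv : gvol G Finset.univ = 2 * m)
    (hexp : ∀ S : Finset V, S.Nonempty → gvol G S ≤ m →
      (Finset.univ \ S).Nonempty → φ * (gvol G S : ℝ) ≤ (gcut G S : ℝ))
    (ℓ : ℕ) (hℓ1 : 1 ≤ ℓ)
    (hpow : 2 * (m : ℝ) ≤ (1 + φ) ^ (ℓ / 2))
    (A' B' : Finset V) (hAB : Disjoint A' B') (hA : A'.Nonempty)
    (hcard : A'.card ≤ B'.card) :
    ∃ PL : List (PT G), good G A' B' ℓ 1 PL ∧ PL.length ≤ A'.card ∧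
      φ * (A'.card : ℝ) ≤ 2 * ((ℓ : ℝ) + 1) * (PL.length : ℝ) := by
  classical
  set s := A'.card with hs
  have hs1 : 1 ≤ s := hA.card_pos
  set Pp : ℕ → Prop := fun n => ∃ PL : List (PT G), good G A' B' ℓ 1 PL ∧ PL.length = n
    with hPp
  have hP0 : Pp 0 := ⟨[], good_nil G A' B' ℓ 1, rfl⟩
  set r := Nat.findGreatest Pp s with hrdef
  have hPr : Pp r := Nat.findGreatest_spec (Nat.zero_le s) hP0
  have hmax : ∀ k, r < k → k ≤ s → ¬ Pp k := fun k h1 h2 =>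
    Nat.findGreatest_is_greatest h1 h2
  obtain ⟨PL, hgood, hlen⟩ := hPr
  have hrles : r ≤ s := Nat.findGreatest_le s
  have hcast_s : (1:ℝ) ≤ (s:ℝ) := by exact_mod_cast hs1
  by_cases hr : r = s
  · refine ⟨PL, hgood, hlen ▸ hrles, ?_⟩
    rw [hlen, hr]
    have hl0 : (0:ℝ) ≤ (ℓ : ℝ) := Nat.cast_nonneg _
    nlinarith
  · have hrs : r < s := lt_of_le_of_ne hrles hr
    set D := sysEdges G PL with hD_def
    have hDcard : D.card ≤ r * ℓ := by
      rw [hD_def, ← hlen]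
      exact card_sysEdges G (fun x hx => (hgood.2.2.2.1 x hx).2)
    have hfstsub : (PL.map fun x => x.1).toFinset ⊆ A' := by
      intro a ha
      rw [List.mem_toFinset, List.mem_map] at ha
      obtain ⟨x, hx, rfl⟩ := ha
      exact (hgood.1 x hx).1
    have hsndsub : (PL.map fun x => x.2.1).toFinset ⊆ B' := by
      intro b hb
      rw [List.mem_toFinset, List.mem_map] at hb
      obtain ⟨x, hx, rfl⟩ := hb
      exact (hgood.1 x hx).2
    have hfstcard : (PL.map fun x => x.1).toFinset.card = r := by
      rw [List.toFinset_card_of_nodup hgood.2.1, List.length_map, hlen]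
    have hsndcard : (PL.map fun x => x.2.1).toFinset.card = r := by
      rw [List.toFinset_card_of_nodup hgood.2.2.1, List.length_map, hlen]
    set TA := A' \ (PL.map fun x => x.1).toFinset with hTA_def
    set TB := B' \ (PL.map fun x => x.2.1).toFinset with hTB_def
    have hTAcard : TA.card = s - r := by
      rw [hTA_def, Finset.card_sdiff_of_subset hfstsub, hfstcard]
    have hTBcard : s - r ≤ TB.card := by
      rw [hTB_def, Finset.card_sdiff_of_subset hsndsub, hsndcard]
      omega
    have hTAne : TA.Nonempty := by
      rw [← Finset.card_pos, hTAcard]; omega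
    have hTBne : TB.Nonempty := by
      rw [← Finset.card_pos]; omega
    -- maximality: no short D-avoiding path between TA and TB
    have hnoconn : ∀ a ∈ TA, ∀ b ∈ TB, ∀ w : G.Walk a b,
        w.length ≤ ℓ → (∀ e ∈ w.edges, e ∉ D) → False := by
      intro a ha b hb w hwlen hwD
      apply hmax (r + 1) (Nat.lt_succ_self r) (by omega)
      refine ⟨⟨a, b, w.bypass⟩ :: PL, ⟨?_, ?_, ?_, ?_, ?_⟩, by simp [hlen]⟩
      · intro x hx
        rcases List.mem_cons.mp hx with hx | hx
        · subst hx
          exact ⟨(Finset.mem_sdiff.mp ha).1, (Finset.mem_sdiff.mp hb).1⟩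
        · exact hgood.1 x hx
      · rw [List.map_cons, List.nodup_cons]
        refine ⟨?_, hgood.2.1⟩
        intro hmem
        have := (Finset.mem_sdiff.mp ha).2
        rw [List.mem_toFinset] at this
        exact this hmem
      · rw [List.map_cons, List.nodup_cons]
        refine ⟨?_, hgood.2.2.1⟩
        intro hmem
        have := (Finset.mem_sdiff.mp hb).2
        rw [List.mem_toFinset] at this
        exact this hmem
      · intro x hx
        rcases List.mem_cons.mp hx with hx | hx
        · subst hx
          exact ⟨SimpleGraph.Walk.bypass_isPath w,
            le_trans (SimpleGraph.Walk.length_bypass_le w) hwlen⟩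
        · exact hgood.2.2.2.1 x hx
      · intro e
        rw [List.countP_cons]
        by_cases he : e ∈ w.bypass.edges
        · have heD : e ∉ D := hwD e (SimpleGraph.Walk.edges_bypass_subset w he)
          have hzero : (PL.countP fun x => decide (e ∈ x.2.2.edges)) = 0 := by
            rw [List.countP_eq_zero]
            intro x hx
            simp only [decide_eq_true_eq]
            intro hmem
            exact heD ((mem_sysEdges G).mpr ⟨x, hx, hmem⟩)
          simp [hzero, he]
        · have : (decide (e ∈ (⟨a, b, w.bypass⟩ : PT G).2.2.edges)) = false := by
            simpa using he
          rw [this]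
          simpa using hgood.2.2.2.2 e
    -- one of the two balls is small
    set r₂ := ℓ / 2 with hr₂
    have h2r₂ : 2 * r₂ ≤ ℓ := by omega
    have hkey : gvol G (ballD G D TA r₂) ≤ m ∨ gvol G (ballD G D TB r₂) ≤ m := by
      by_contra hcon
      push_neg at hcon
      obtain ⟨h1, h2⟩ := hcon
      have hlt : gvol G Finset.univ <
          gvol G (ballD G D TA r₂) + gvol G (ballD G D TB r₂) := by
        rw [huniv]; omega
      obtain ⟨z, hz⟩ := vol_inter_nonempty G hlt
      rw [Finset.mem_inter] at hz
      obtain ⟨a, ha, w1, hw1len, hw1D⟩ := reach_of_mem_ballD G D TA r₂ z hz.1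
      obtain ⟨b, hb, w2, hw2len, hw2D⟩ := reach_of_mem_ballD G D TB r₂ z hz.2
      refine hnoconn a ha b hb (w1.append w2.reverse) ?_ ?_
      · rw [SimpleGraph.Walk.length_append, SimpleGraph.Walk.length_reverse]
        omega
      · intro e he
        rw [SimpleGraph.Walk.edges_append, List.mem_append] at he
        rcases he with he | he
        · exact hw1D e he
        · rw [SimpleGraph.Walk.edges_reverse, List.mem_reverse] at he
          exact hw2D e he
    have hcert : ((s - r : ℕ) : ℝ) ≤ 1 / 2 + (D.card : ℝ) / φ := by
      rcases hkey with hkey | hkey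
      · have := certificate G D φ hφ0 m hm hmin huniv hexp TA hTAne r₂ hkey hpow
        rw [hTAcard] at this
        exact this
      · have := certificate G D φ hφ0 m hm hmin huniv hexp TB hTBne r₂ hkey hpow
        refine le_trans ?_ this
        exact_mod_cast hTBcard
    -- numerics
    refine ⟨PL, hgood, hlen ▸ hrles, ?_⟩
    rw [hlen]
    have hx1 : (1:ℝ) ≤ ((s - r : ℕ) : ℝ) := by
      have : 1 ≤ s - r := by omega
      exact_mod_cast this
    have hxsr : ((s - r : ℕ) : ℝ) = (s : ℝ) - (r : ℝ) := by
      rw [Nat.cast_sub hrles]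
    have hDr : (D.card : ℝ) ≤ (r : ℝ) * (ℓ : ℝ) := by exact_mod_cast hDcard
    have hφx : φ * ((s : ℝ) - (r : ℝ)) ≤ 2 * ((r : ℝ) * (ℓ : ℝ)) := by
      rw [← hxsr]
      have h3 : ((s - r : ℕ) : ℝ) / 2 ≤ (D.card : ℝ) / φ := by linarith
      have h4 : φ * ((s - r : ℕ) : ℝ) ≤ 2 * (D.card : ℝ) := by
        rw [div_le_div_iff₀ (by norm_num) hφ0] at h3
        linarith
      linarith
    have hr0 : (0:ℝ) ≤ (r : ℝ) := Nat.cast_nonneg _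
    nlinarith

lemma main_induction (φ : ℝ) (hφ0 : 0 < φ) (hφ2 : φ ≤ 2) (m : ℕ) (hm : 1 ≤ m)
    (hmin : ∀ v : V, 1 ≤ gdeg G v)
    (huniv : gvol G Finset.univ = 2 * m)
    (hexp : ∀ S : Finset V, S.Nonempty → gvol G S ≤ m →
      (Finset.univ \ S).Nonempty → φ * (gvol G S : ℝ) ≤ (gcut G S : ℝ))
    (ℓ : ℕ) (hℓ1 : 1 ≤ ℓ)
    (hpow : 2 * (m : ℝ) ≤ (1 + φ) ^ (ℓ / 2)) :
    ∀ s : ℕ, ∀ A' B' : Finset V, A'.card = s → Disjoint A' B' → A'.card ≤ B'.card →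
      ∀ t : ℕ, (1 - φ / (2 * ((ℓ : ℝ) + 1))) ^ t * (s : ℝ) < 1 →
      ∃ PL : List (PT G), good G A' B' ℓ t PL ∧ PL.length = A'.card := by
  intro s
  induction s using Nat.strong_induction_on with
  | _ s IH =>
    intro A' B' hcardA hdisj hle t ht
    set ρ := φ / (2 * ((ℓ : ℝ) + 1)) with hρ_def
    have hℓ0 : (0:ℝ) < (ℓ : ℝ) + 1 := by positivity
    have hρ0 : 0 < ρ := by positivity
    have hρ1 : ρ ≤ 1 := by
      rw [hρ_def, div_le_one (by positivity)]
      have : (1:ℝ) ≤ (ℓ:ℝ) := by exact_mod_cast hℓ1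
      linarith
    rcases Nat.eq_zero_or_pos s with hs0 | hs0
    · subst hs0
      have : A' = ∅ := Finset.card_eq_zero.mp hcardA
      exact ⟨[], good_nil G A' B' ℓ t, by simp [this]⟩
    · have hA'ne : A'.Nonempty := by rw [← Finset.card_pos, hcardA]; omega
      cases t with
      | zero =>
        exfalso
        rw [pow_zero, one_mul] at ht
        have : (1:ℝ) ≤ (s:ℝ) := by exact_mod_cast hs0
        linarith
      | succ t' =>
        obtain ⟨PL₁, hg1, hlen1, hineq⟩ :=
          round_lemma G φ hφ0 hφ2 m hm hmin huniv hexp ℓ hℓ1 hpow A' B' hdisj hA'ne hle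
        set r := PL₁.length with hr_def
        have hr1 : 1 ≤ r := by
          by_contra hr0
          have : r = 0 := by omega
          rw [this] at hineq
          have hs1 : (1:ℝ) ≤ (s:ℝ) := by exact_mod_cast hs0
          rw [hcardA] at hineq
          simp at hineq
          nlinarith
        have hrs : r ≤ s := hcardA ▸ hlen1
        have hfstsub : (PL₁.map fun x => x.1).toFinset ⊆ A' := by
          intro a ha
          rw [List.mem_toFinset, List.mem_map] at ha
          obtain ⟨x, hx, rfl⟩ := ha
          exact (hg1.1 x hx).1
        have hsndsub : (PL₁.map fun x => x.2.1).toFinset ⊆ B' := by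
          intro b hb
          rw [List.mem_toFinset, List.mem_map] at hb
          obtain ⟨x, hx, rfl⟩ := hb
          exact (hg1.1 x hx).2
        have hfstcard : (PL₁.map fun x => x.1).toFinset.card = r := by
          rw [List.toFinset_card_of_nodup hg1.2.1, List.length_map]
        have hsndcard : (PL₁.map fun x => x.2.1).toFinset.card = r := by
          rw [List.toFinset_card_of_nodup hg1.2.2.1, List.length_map]
        set A'' := A' \ (PL₁.map fun x => x.1).toFinset with hA''_def
        set B'' := B' \ (PL₁.map fun x => x.2.1).toFinset with hB''_def
        have hA''card : A''.card = s - r := by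
          rw [hA''_def, Finset.card_sdiff_of_subset hfstsub, hfstcard, hcardA]
        have hB''card : B'.card - r ≤ B''.card := by
          rw [hB''_def, Finset.card_sdiff_of_subset hsndsub, hsndcard]
        have hle'' : A''.card ≤ B''.card := by
          rw [hA''card]
          have : s ≤ B'.card := hcardA ▸ hle
          omega
        have hdisj'' : Disjoint A'' B'' :=
          Finset.disjoint_of_subset_left (Finset.sdiff_subset)
            (Finset.disjoint_of_subset_right (Finset.sdiff_subset) hdisj)
        have hsr_cast : ((s - r : ℕ) : ℝ) = (s : ℝ) - (r : ℝ) := by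
          rw [Nat.cast_sub hrs]
        have hρs_le_r : ρ * (s : ℝ) ≤ (r : ℝ) := by
          rw [hρ_def, div_mul_eq_mul_div, div_le_iff₀ (by positivity)]
          rw [hcardA] at hineq
          linarith
        have ht' : (1 - ρ) ^ t' * ((s - r : ℕ) : ℝ) < 1 := by
          have h1 : ((s - r : ℕ) : ℝ) ≤ (1 - ρ) * (s : ℝ) := by
            rw [hsr_cast]; nlinarith
          have h2 : (0:ℝ) ≤ (1 - ρ) ^ t' := by
            apply pow_nonneg; linarith
          calc (1 - ρ) ^ t' * ((s - r : ℕ) : ℝ)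
              ≤ (1 - ρ) ^ t' * ((1 - ρ) * (s : ℝ)) := by
                apply mul_le_mul_of_nonneg_left h1 h2
            _ = (1 - ρ) ^ (t' + 1) * (s : ℝ) := by ring
            _ < 1 := ht
        obtain ⟨PL₂, hg2, hlen2⟩ := IH (s - r) (by omega) A'' B''
          hA''card hdisj'' hle'' t' ht'
        refine ⟨PL₁ ++ PL₂, ?_, ?_⟩
        · have := good_append G hg1 hg2 hA''_def (hB''_def ▸ Finset.Subset.refl _)
          have heq : 1 + t' = t' + 1 := by omega
          rwa [heq] at this
        · rw [List.length_append, hlen2, hA''card, hcardA]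
          omega

lemma convert_sys (A B : Finset V) (ℓ c : ℕ) (PL : List (PT G))
    (hg : good G A B ℓ c PL) (hlen : PL.length = A.card) :
    ∃ M : Finset (V × V),
      (∀ p ∈ M, p.1 ∈ A ∧ p.2 ∈ B) ∧
      (∀ p ∈ M, ∀ q ∈ M, p ≠ q → p.1 ≠ q.1 ∧ p.2 ≠ q.2) ∧
      M.card = A.card ∧
      ∃ P : ∀ p : {x : V × V // x ∈ M}, G.Walk p.1.1 p.1.2,
        (∀ p, (P p).IsPath ∧ (P p).length ≤ ℓ) ∧
        (∀ e : Sym2 V, {p : {x : V × V // x ∈ M} | e ∈ (P p).edges}.ncard ≤ c) := by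
  classical
  obtain ⟨h1, h2, h3, h4, h5⟩ := hg
  set pairs := PL.map (fun x => (x.1, x.2.1)) with hpairs_def
  have hfst_eq : pairs.map Prod.fst = PL.map (fun x => x.1) := by
    rw [hpairs_def, List.map_map]; rfl
  have hsnd_eq : pairs.map Prod.snd = PL.map (fun x => x.2.1) := by
    rw [hpairs_def, List.map_map]; rfl
  have hpairs_nodup : pairs.Nodup := List.Nodup.of_map Prod.fst (hfst_eq ▸ h2)
  set M := pairs.toFinset with hM_def
  have hMcard : M.card = A.card := by
    rw [hM_def, List.toFinset_card_of_nodup hpairs_nodup, hpairs_def,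
      List.length_map, hlen]
  have hmemM : ∀ p : V × V, p ∈ M ↔ ∃ x ∈ PL, (x.1, x.2.1) = p := by
    intro p
    rw [hM_def, List.mem_toFinset, hpairs_def, List.mem_map]
  have hinj1 : ∀ p ∈ pairs, ∀ q ∈ pairs, p.1 = q.1 → p = q :=
    List.inj_on_of_nodup_map (hfst_eq ▸ h2)
  have hinj2 : ∀ p ∈ pairs, ∀ q ∈ pairs, p.2 = q.2 → p = q :=
    List.inj_on_of_nodup_map (hsnd_eq ▸ h3)
  refine ⟨M, ?_, ?_, hMcard, ?_⟩
  · intro p hp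
    obtain ⟨x, hx, rfl⟩ := (hmemM p).mp hp
    exact h1 x hx
  · intro p hp q hq hpq
    constructor
    · intro h
      exact hpq (hinj1 p (List.mem_toFinset.mp hp) q (List.mem_toFinset.mp hq) h)
    · intro h
      exact hpq (hinj2 p (List.mem_toFinset.mp hp) q (List.mem_toFinset.mp hq) h)
  · have hex : ∀ p : {x : V × V // x ∈ M},
        ∃ x : PT G, x ∈ PL ∧ x.1 = p.1.1 ∧ x.2.1 = p.1.2 := by
      intro p
      obtain ⟨x, hx, hxe⟩ := (hmemM p.1).mp p.2
      exact ⟨x, hx, congrArg Prod.fst hxe, congrArg Prod.snd hxe⟩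
    set F := fun p => Classical.choose (hex p) with hF_def
    have hFspec : ∀ p, F p ∈ PL ∧ (F p).1 = p.1.1 ∧ (F p).2.1 = p.1.2 :=
      fun p => Classical.choose_spec (hex p)
    refine ⟨fun p => ((F p).2.2).copy (hFspec p).2.1 (hFspec p).2.2, ?_, ?_⟩
    · intro p
      rw [SimpleGraph.Walk.isPath_copy, SimpleGraph.Walk.length_copy]
      exact h4 (F p) (hFspec p).1
    · intro e
      have hmaps : ∀ p : {x : V × V // x ∈ M},
          e ∈ (((F p).2.2).copy (hFspec p).2.1 (hFspec p).2.2).edges →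
          F p ∈ (PL.filter (fun x => decide (e ∈ x.2.2.edges))).toFinset := by
        intro p hp
        rw [SimpleGraph.Walk.edges_copy] at hp
        rw [List.mem_toFinset, List.mem_filter]
        exact ⟨(hFspec p).1, by simpa using hp⟩
      have hFinj : Function.Injective F := by
        intro p q hpq
        have h1' := (hFspec p).2.1
        have h2' := (hFspec p).2.2
        have h3' := (hFspec q).2.1
        have h4' := (hFspec q).2.2
        rw [hpq] at h1' h2'
        apply Subtype.ext
        apply Prod.ext
        · rw [← h1', h3']
        · rw [← h2', h4']
      calc {p : {x : V × V // x ∈ M} |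
            e ∈ (((F p).2.2).copy (hFspec p).2.1 (hFspec p).2.2).edges}.ncard
          ≤ ((((PL.filter (fun x => decide (e ∈ x.2.2.edges))).toFinset : Finset (PT G))) :
              Set (PT G)).ncard := by
            apply Set.ncard_le_ncard_of_injOn F
            · intro p hp
              exact hmaps p hp
            · exact fun p _ q _ h => hFinj h
        _ = ((PL.filter (fun x => decide (e ∈ x.2.2.edges))).toFinset).card :=
            Set.ncard_coe_finset _
        _ ≤ (PL.filter (fun x => decide (e ∈ x.2.2.edges))).length :=
            List.toFinset_card_le _
        _ = PL.countP (fun x => decide (e ∈ x.2.2.edges)) :=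
            List.countP_eq_length_filter.symm
        _ ≤ c := h5 e



/-- Either a perfect matching of `A` into `B`, embedded by paths of length at
most `ℓ` with every edge of `G` lying on at most `ℓ²` of the paths, or a sparse
cut. -/
theorem statement12 (G : SimpleGraph V) (hm : 2 ≤ edgeCount G)
    (hmin : ∀ v : V, 1 ≤ gdeg G v)
    (A B : Finset V) (hAB : Disjoint A B) (hcard : A.card ≤ B.card)
    (ℓ : ℕ) (hℓ : 32 * Real.logb 2 (edgeCount G) ≤ (ℓ : ℝ)) :
    (∃ M : Finset (V × V),
      (∀ p ∈ M, p.1 ∈ A ∧ p.2 ∈ B) ∧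
      (∀ p ∈ M, ∀ q ∈ M, p ≠ q → p.1 ≠ q.1 ∧ p.2 ≠ q.2) ∧
      M.card = A.card ∧
      ∃ P : ∀ p : {x : V × V // x ∈ M}, G.Walk p.1.1 p.1.2,
        (∀ p, (P p).IsPath ∧ (P p).length ≤ ℓ) ∧
        (∀ e : Sym2 V, {p : {x : V × V // x ∈ M} | e ∈ (P p).edges}.ncard ≤ ℓ ^ 2)) ∨
    (∃ X : Finset V, X.Nonempty ∧ (Finset.univ \ X).Nonempty ∧
      (gcut G X : ℝ) ≤ 24 * Real.logb 2 (edgeCount G) / (ℓ : ℝ) *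
        min (gvol G X : ℝ) (gvol G (Finset.univ \ X) : ℝ)) := by
  classical
  by_cases hsparse : ∃ X : Finset V, X.Nonempty ∧ (Finset.univ \ X).Nonempty ∧
      (gcut G X : ℝ) ≤ 24 * Real.logb 2 (edgeCount G) / (ℓ : ℝ) *
        min (gvol G X : ℝ) (gvol G (Finset.univ \ X) : ℝ)
  · exact Or.inr hsparse
  left
  push_neg at hsparse
  set m := edgeCount G with hm_def
  set L := Real.logb 2 (m : ℝ) with hL_def
  have hlog2pos : (0:ℝ) < Real.log 2 := Real.log_pos one_lt_two
  have hm1 : 1 ≤ m := by omega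
  have hm2 : (2:ℝ) ≤ (m:ℝ) := by exact_mod_cast hm
  have hmpos : (0:ℝ) < (m:ℝ) := by linarith
  have hL1 : (1:ℝ) ≤ L := by
    rw [hL_def, Real.logb, le_div_iff₀ hlog2pos, one_mul]
    exact Real.log_le_log (by norm_num) hm2
  have hlogm : Real.log (m:ℝ) = L * Real.log 2 := by
    rw [hL_def, Real.logb, div_mul_cancel₀]
    exact ne_of_gt hlog2pos
  have hlℝ : (32:ℝ) * L ≤ (ℓ:ℝ) := hℓ
  have hl32 : 32 ≤ ℓ := by
    have h32 : (32:ℝ) ≤ (ℓ:ℝ) := by nlinarith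
    exact_mod_cast h32
  have hℓ1 : 1 ≤ ℓ := by omega
  have hℓ32ℝ : (32:ℝ) ≤ (ℓ:ℝ) := by exact_mod_cast hl32
  have hℓpos : (0:ℝ) < (ℓ:ℝ) := by linarith
  set φ := 24 * L / (ℓ:ℝ) with hφ_def
  have hφ0 : 0 < φ := by rw [hφ_def]; positivity
  have hφ34 : φ ≤ 3/4 := by
    rw [hφ_def, div_le_iff₀ hℓpos]
    nlinarith
  have hφ2 : φ ≤ 2 := by linarith
  have huniv : gvol G Finset.univ = 2 * m := gvol_univ G
  -- expansion from the absence of a sparse cut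
  have hexp : ∀ S : Finset V, S.Nonempty → gvol G S ≤ m →
      (Finset.univ \ S).Nonempty → φ * (gvol G S : ℝ) ≤ (gcut G S : ℝ) := by
    intro S hS1 hS2 hS3
    have hsp := hsparse S hS1 hS3
    have hsplit : gvol G Finset.univ = gvol G S + gvol G (Finset.univ \ S) :=
      gvol_split G S
    have hvols : (gvol G S : ℝ) ≤ (gvol G (Finset.univ \ S) : ℝ) := by
      have h1 : gvol G S + gvol G (Finset.univ \ S) = 2 * m := by omega
      have h2 : gvol G S ≤ gvol G (Finset.univ \ S) := by omega
      exact_mod_cast h2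
    have hmin_eq : min (gvol G S : ℝ) (gvol G (Finset.univ \ S) : ℝ) = (gvol G S : ℝ) :=
      min_eq_left hvols
    rw [hmin_eq] at hsp
    rw [hφ_def]
    linarith
  -- the power inequality for radius ℓ/2
  have hφ1' : (0:ℝ) < 1 + φ := by linarith
  have hlog1φ : φ / 2 ≤ Real.log (1 + φ) := by
    have h1 : Real.log (1 + φ)⁻¹ ≤ (1 + φ)⁻¹ - 1 :=
      Real.log_le_sub_one_of_pos (by positivity)
    rw [Real.log_inv] at h1
    have h2 : φ / (1 + φ) ≤ Real.log (1 + φ) := by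
      have : (1 + φ)⁻¹ - 1 = -(φ / (1 + φ)) := by
        field_simp
        ring
      rw [this] at h1
      linarith
    have h3 : φ / 2 ≤ φ / (1 + φ) := by
      apply div_le_div_of_nonneg_left (le_of_lt hφ0) hφ1'
      linarith
    linarith
  have hr2cast : ((ℓ:ℝ) - 1) / 2 ≤ ((ℓ / 2 : ℕ) : ℝ) := by
    have h1 : ℓ - 1 ≤ 2 * (ℓ / 2) := by omega
    have h2 : ((ℓ - 1 : ℕ) : ℝ) ≤ (2 * (ℓ / 2 : ℕ) : ℕ) := by exact_mod_cast h1
    rw [Nat.cast_sub hℓ1] at h2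
    push_cast at h2
    linarith
  have hlog2lt : Real.log 2 ≤ 0.6931471808 := le_of_lt Real.log_two_lt_d9
  have hpow : 2 * (m : ℝ) ≤ (1 + φ) ^ (ℓ / 2) := by
    have hppos : (0:ℝ) < (1 + φ) ^ (ℓ / 2) := pow_pos hφ1' _
    have hlogpow : Real.log ((1 + φ) ^ (ℓ / 2)) = ((ℓ / 2 : ℕ) : ℝ) * Real.log (1 + φ) := by
      rw [Real.log_pow]
    -- lower bound on the exponent sum
    have hphl : 5 * L ≤ ((ℓ / 2 : ℕ) : ℝ) * (φ / 2) := by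
      have hφval : φ / 2 = 12 * L / (ℓ:ℝ) := by rw [hφ_def]; ring
      rw [hφval]
      have hmono : ((ℓ:ℝ) - 1) / 2 * (12 * L / (ℓ:ℝ)) ≤
          ((ℓ / 2 : ℕ) : ℝ) * (12 * L / (ℓ:ℝ)) := by
        apply mul_le_mul_of_nonneg_right hr2cast
        positivity
      have hval : ((ℓ:ℝ) - 1) / 2 * (12 * L / (ℓ:ℝ)) = 6 * L * (1 - 1/(ℓ:ℝ)) := by
        field_simp
        ring
      have hinv : 1/(ℓ:ℝ) ≤ 1/32 := by
        rw [div_le_div_iff₀ hℓpos (by norm_num)]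
        linarith
      nlinarith
    have hlog2m : Real.log (2 * (m:ℝ)) ≤ 5 * L := by
      rw [Real.log_mul (by norm_num) (ne_of_gt hmpos), hlogm]
      nlinarith
    have : Real.log (2 * (m:ℝ)) ≤ Real.log ((1 + φ) ^ (ℓ / 2)) := by
      rw [hlogpow]
      have : ((ℓ / 2 : ℕ) : ℝ) * (φ / 2) ≤ ((ℓ / 2 : ℕ) : ℝ) * Real.log (1 + φ) := by
        apply mul_le_mul_of_nonneg_left hlog1φ (Nat.cast_nonneg _)
      linarith
    calc 2 * (m:ℝ) = Real.exp (Real.log (2 * (m:ℝ))) := (Real.exp_log (by linarith)).symm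
      _ ≤ Real.exp (Real.log ((1 + φ) ^ (ℓ / 2))) := Real.exp_le_exp.mpr this
      _ = (1 + φ) ^ (ℓ / 2) := Real.exp_log hppos
  -- the count of pairs is at most m
  have hAm : A.card ≤ m := by
    have h1 : A.card + B.card = (A ∪ B).card := (Finset.card_union_of_disjoint hAB).symm
    have h2 : (A ∪ B).card ≤ Finset.univ.card := Finset.card_le_card (Finset.subset_univ _)
    have h3 : Finset.univ.card ≤ gvol G Finset.univ := card_le_gvol G hmin _
    omega
  -- the decay inequality
  set ρ := φ / (2 * ((ℓ:ℝ) + 1)) with hρ_def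
  have hρ0 : 0 < ρ := by rw [hρ_def]; positivity
  have hρ1 : ρ ≤ 1/2 := by
    rw [hρ_def, div_le_iff₀ (by positivity)]
    nlinarith
  have hdecay : (1 - ρ) ^ (ℓ^2) * (A.card : ℝ) < 1 := by
    have h1 : (1 - ρ) ≤ Real.exp (-ρ) := by
      have := Real.add_one_le_exp (-ρ)
      linarith
    have h2 : (0:ℝ) ≤ 1 - ρ := by linarith
    have h3 : (1 - ρ) ^ (ℓ^2) ≤ Real.exp (-ρ) ^ (ℓ^2) := pow_le_pow_left₀ h2 h1 _
    have h4 : Real.exp (-ρ) ^ (ℓ^2) = Real.exp (-(ρ * (ℓ^2 : ℕ))) := by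
      rw [← Real.exp_nat_mul]
      ring_nf
    have h5 : Real.log (m:ℝ) < ρ * ((ℓ^2 : ℕ) : ℝ) := by
      have hρval : ρ * ((ℓ^2:ℕ) : ℝ) = 12 * L * (ℓ:ℝ) / ((ℓ:ℝ) + 1) := by
        rw [hρ_def, hφ_def]
        push_cast
        field_simp
        ring
      rw [hρval, hlogm]
      have hfrac : (1:ℝ)/2 ≤ (ℓ:ℝ) / ((ℓ:ℝ) + 1) := by
        rw [div_le_div_iff₀ (by norm_num) (by positivity)]
        linarith
      have h6L : 6 * L ≤ 12 * L * (ℓ:ℝ) / ((ℓ:ℝ) + 1) := by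
        have : 12 * L * (ℓ:ℝ) / ((ℓ:ℝ) + 1) = 12 * L * ((ℓ:ℝ) / ((ℓ:ℝ) + 1)) := by ring
        rw [this]
        nlinarith
      nlinarith
    have h6 : (A.card : ℝ) ≤ (m:ℝ) := by exact_mod_cast hAm
    have h7 : Real.exp (-(ρ * ((ℓ^2:ℕ):ℝ))) * (m:ℝ) < 1 := by
      rw [← Real.exp_log hmpos, ← Real.exp_add]
      have harg : -(ρ * ((ℓ^2:ℕ):ℝ)) + Real.log (m:ℝ) < 0 := by linarith
      calc Real.exp (-(ρ * ((ℓ^2:ℕ):ℝ)) + Real.log (m:ℝ)) < Real.exp 0 :=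
        Real.exp_lt_exp.mpr harg
      _ = 1 := Real.exp_zero
    have h8 : (0:ℝ) ≤ (A.card : ℝ) := Nat.cast_nonneg _
    have h9 : (1 - ρ) ^ (ℓ^2) * (A.card : ℝ) ≤ Real.exp (-(ρ * ((ℓ^2:ℕ):ℝ))) * (m:ℝ) := by
      have h10 := mul_le_mul h3 h6 h8 (le_of_lt (pow_pos (Real.exp_pos _) _))
      rw [h4] at h10
      exact h10
    linarith
  -- apply the main induction
  obtain ⟨PL, hgood, hlen⟩ := main_induction G φ hφ0 hφ2 m hm1 hmin huniv hexp ℓ hℓ1 hpow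
    A.card A B rfl hAB hcard (ℓ^2) (hρ_def ▸ hdecay)
  exact convert_sys G A B ℓ (ℓ^2) PL hgood hlen
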